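/- Sinh-log coefficient identity (Lemma 2.6 and Corollary 2.7, word form). Fix n ≥ 1 and ε ∈ ℝ, and define the partial sinh-log coefficients C_1 = 1, C_k = (1/2)(−1)^{k−1} for 2 ≤ k ≤ n, and C_{n+1} = (1/2)(−1)^n + ε. Then for every word w = a_1⋯a_{n+1} of length n+1 over A, Σ_{k=1}^{n+1} C_k Σ_{(u_1,…,u_k) : each u_i nonempty, u_1⋯u_k = w} u_1 ⧢ ⋯ ⧢ u_k = (1/2)( a_1⋯a_{n+1} − (−1)^{n+1} a_{n+1}⋯a_1 ) + ε ( a_1 ⧢ a_2 ⧢ ⋯ ⧢ a_{n+1} ), i.e. the sum equals (1/2)(w − α(w)) + ε times the full shuffle of the letters of w. -/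

import Mathlib

/-!
Words over an alphabet `A` are elements of `List A`; the free noncommutative
algebra `ℝ⟨A⟩` is realised as the free `ℝ`-module `List A →₀ ℝ` with the words
as an `ℝ`-basis (a word `w` is the element `Finsupp.single w 1`, and
concatenation of words is list append).
-/

variable {A : Type*}

/-- The shuffle product of two words, valued in `ℝ⟨A⟩ = List A →₀ ℝ`:
`1 ⧢ w = w ⧢ 1 = w` and
`(a·u) ⧢ (b·v) = a·(u ⧢ (b·v)) + b·((a·u) ⧢ v)`,
where prepending a letter to every word of an element is `Finsupp.mapDomain (List.cons _)`. -/
noncomputable def shuffle : List A → List A → (List A →₀ ℝ)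
  | [], v => Finsupp.single v 1
  | u, [] => Finsupp.single u 1
  | a :: u, b :: v =>
      Finsupp.mapDomain (List.cons a) (shuffle u (b :: v)) +
        Finsupp.mapDomain (List.cons b) (shuffle (a :: u) v)
  termination_by u v => u.length + v.length

/-- The bilinear extension of the shuffle product to all of `ℝ⟨A⟩`. -/
noncomputable def shP (P Q : List A →₀ ℝ) : List A →₀ ℝ :=
  P.sum fun u cu => Q.sum fun v cv => (cu * cv) • shuffle u v

/-- The shuffle product `u₁ ⧢ u₂ ⧢ ⋯ ⧢ u_k` of a finite list of words
(the empty shuffle being the empty word, the unit of the shuffle algebra). -/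
noncomputable def shuffleList (L : List (List A)) : List A →₀ ℝ :=
  L.foldr (fun u acc => shP (Finsupp.single u 1) acc) (Finsupp.single [] 1)

/-- The unsigned reversal `ρ`, with `ρ(a₁⋯aₙ) = aₙ⋯a₁` on words, extended linearly. -/
noncomputable def rho (P : List A →₀ ℝ) : List A →₀ ℝ :=
  Finsupp.mapDomain List.reverse P

/-- The signed reversal `α`, with `α(a₁⋯aₙ) = (-1)ⁿ aₙ⋯a₁` on words, extended linearly. -/
noncomputable def alphaMap (P : List A →₀ ℝ) : List A →₀ ℝ :=
  P.sum fun w c => Finsupp.single w.reverse ((-1 : ℝ) ^ w.length * c)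

/-- `D w = Σ_{k=1}^{|w|} (−1)^{k−1} Σ_{u₁⋯u_k = w, each uᵢ nonempty} u₁ ⧢ ⋯ ⧢ u_k`:
the ordered decompositions of `w` into `k` nonempty factors are parametrised by the
compositions `c` of `|w|` with `c.length = k`, the factors being
`w.splitWrtComposition c`. -/
noncomputable def D (w : List A) : List A →₀ ℝ :=
  ∑ c : Composition w.length,
    ((-1 : ℝ)) ^ (c.length - 1) • shuffleList (w.splitWrtComposition c)

/-- The partial sinh-log coefficients: `C 1 = 1`, `C k = (1/2)(−1)^{k−1}` for
`2 ≤ k ≤ n`, and `C (n+1) = (1/2)(−1)ⁿ + ε`. -/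
noncomputable def sinhlogC (n : ℕ) (ε : ℝ) (k : ℕ) : ℝ :=
  if k = n + 1 then (1 / 2) * (-1 : ℝ) ^ n + ε
  else if k = 1 then 1
  else (1 / 2) * (-1 : ℝ) ^ (k - 1)

lemma shuffle_nil_left (v : List A) : shuffle [] v = Finsupp.single v 1 := by
  cases v <;> simp [shuffle]

lemma shuffle_nil_right (u : List A) : shuffle u [] = Finsupp.single u 1 := by
  cases u <;> simp [shuffle]

lemma shuffle_cons_cons (a b : A) (u v : List A) :
    shuffle (a :: u) (b :: v) =
      Finsupp.mapDomain (List.cons a) (shuffle u (b :: v)) +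
        Finsupp.mapDomain (List.cons b) (shuffle (a :: u) v) := by
  rw [shuffle]

noncomputable def Tsum (w : List A) : List A →₀ ℝ :=
  ∑ i ∈ Finset.range (w.length + 1),
    ((-1 : ℝ)) ^ (w.length - i) • shuffle (w.take i) (w.drop i).reverse

lemma Tsum_singleton (x : A) : Tsum [x] = 0 := by
  rw [Tsum]
  simp [Finset.sum_range_succ, shuffle_nil_left, shuffle_nil_right]

lemma Tsum_rec (a z : A) (s : List A) :
    Tsum (a :: (s ++ [z])) =
      Finsupp.mapDomain (List.cons a) (Tsum (s ++ [z])) -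
        Finsupp.mapDomain (List.cons z) (Tsum (a :: s)) := by
  set m := s.length with hm
  set w := a :: (s ++ [z]) with hw
  have hm2 : w.length = m + 2 := by simp [hw, hm]
  have hm1 : (s ++ [z]).length = m + 1 := by simp [hm]
  have hm1' : (a :: s).length = m + 1 := by simp [hm]
  have hrev : w.reverse = z :: (a :: s).reverse := by simp [hw]
  -- uniform splitting of the middle terms
  have key : ∀ j ≤ m, shuffle (w.take (j+1)) (w.drop (j+1)).reverse
      = Finsupp.mapDomain (List.cons a)
          (shuffle ((s ++ [z]).take j) ((s ++ [z]).drop j).reverse)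
        + Finsupp.mapDomain (List.cons z)
          (shuffle (a :: s.take j) (s.drop j).reverse) := by
    intro j hj
    have h1 : w.take (j+1) = a :: (s ++ [z]).take j := List.take_succ_cons
    have h2 : w.drop (j+1) = (s ++ [z]).drop j := List.drop_succ_cons
    have h3 : (s ++ [z]).drop j = s.drop j ++ [z] :=
      List.drop_append_of_le_length (by omega)
    have h5 : (s ++ [z]).take j = s.take j :=
      List.take_append_of_le_length (by omega)
    have h4 : (s.drop j ++ [z]).reverse = z :: (s.drop j).reverse := by simp
    rw [h1, h2, h3, h5, h4, shuffle_cons_cons]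
  -- expand LHS, peeling off i = 0
  have L1 : Tsum w = (∑ j ∈ Finset.range (m + 2),
      ((-1:ℝ)) ^ (m + 1 - j) • shuffle (w.take (j+1)) (w.drop (j+1)).reverse)
      + ((-1:ℝ)) ^ (m + 2) • Finsupp.single w.reverse 1 := by
    rw [Tsum, hm2, Finset.sum_range_succ']
    congr 1
    · apply Finset.sum_congr rfl
      intro j hj
      have : m + 2 - (j + 1) = m + 1 - j := by omega
      rw [this]
    · simp [shuffle_nil_left]
  -- the a-part over range (m+2) is mapDomain (cons a) of Tsum (s ++ [z])
  have L2 : (∑ j ∈ Finset.range (m + 2), ((-1:ℝ)) ^ (m + 1 - j) •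
        Finsupp.mapDomain (List.cons a)
          (shuffle ((s ++ [z]).take j) ((s ++ [z]).drop j).reverse))
      = Finsupp.mapDomain (List.cons a) (Tsum (s ++ [z])) := by
    rw [Tsum, hm1, Finsupp.mapDomain_finset_sum]
    apply Finset.sum_congr rfl
    intro j hj
    rw [Finsupp.mapDomain_smul]
  -- the last middle term equals the last a-part term
  have L4 : shuffle (w.take (m + 1 + 1)) (w.drop (m + 1 + 1)).reverse
      = Finsupp.mapDomain (List.cons a)
          (shuffle ((s ++ [z]).take (m+1)) ((s ++ [z]).drop (m+1)).reverse) := by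
    have e1 : w.take (m + 2) = w := List.take_of_length_le (by omega)
    have e2 : w.drop (m + 2) = [] := List.drop_eq_nil_of_le (by omega)
    have e3 : (s ++ [z]).take (m+1) = s ++ [z] := List.take_of_length_le (by omega)
    have e4 : (s ++ [z]).drop (m+1) = [] := List.drop_eq_nil_of_le (by omega)
    rw [e1, e2, e3, e4]
    simp [shuffle_nil_right, Finsupp.mapDomain_single, hw]
  -- expansion of Tsum (a :: s), peeling i = 0
  have L5 : Finsupp.mapDomain (List.cons z) (Tsum (a :: s))
      = (∑ j ∈ Finset.range (m+1), ((-1:ℝ)) ^ (m - j) •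
          Finsupp.mapDomain (List.cons z)
            (shuffle (a :: s.take j) (s.drop j).reverse))
        + ((-1:ℝ)) ^ (m+1) • Finsupp.single (z :: (a :: s).reverse) 1 := by
    rw [Tsum, hm1', Finset.sum_range_succ', Finsupp.mapDomain_add,
      Finsupp.mapDomain_finset_sum]
    congr 1
    · apply Finset.sum_congr rfl
      intro j hj
      rw [Finsupp.mapDomain_smul]
      have e1 : m + 1 - (j + 1) = m - j := by omega
      rw [e1, List.take_succ_cons, List.drop_succ_cons]
    · simp [shuffle_nil_left, Finsupp.mapDomain_smul, Finsupp.mapDomain_single]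
  -- assemble
  have L2' := L2
  rw [Finset.sum_range_succ] at L2'
  rw [L1]
  have mid : (∑ j ∈ Finset.range (m + 2),
      ((-1:ℝ)) ^ (m + 1 - j) • shuffle (w.take (j+1)) (w.drop (j+1)).reverse)
      = Finsupp.mapDomain (List.cons a) (Tsum (s ++ [z]))
        + ∑ j ∈ Finset.range (m+1), ((-1:ℝ)) ^ (m + 1 - j) •
            Finsupp.mapDomain (List.cons z)
              (shuffle (a :: s.take j) (s.drop j).reverse) := by
    have step : ∀ j ∈ Finset.range (m+1),
        ((-1:ℝ)) ^ (m + 1 - j) • shuffle (w.take (j+1)) (w.drop (j+1)).reverse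
        = ((-1:ℝ)) ^ (m + 1 - j) • Finsupp.mapDomain (List.cons a)
            (shuffle ((s ++ [z]).take j) ((s ++ [z]).drop j).reverse)
          + ((-1:ℝ)) ^ (m + 1 - j) • Finsupp.mapDomain (List.cons z)
            (shuffle (a :: s.take j) (s.drop j).reverse) := by
      intro j hj
      rw [key j (Nat.lt_succ_iff.mp (Finset.mem_range.mp hj)), smul_add]
    rw [Finset.sum_range_succ, Finset.sum_congr rfl step, Finset.sum_add_distrib, L4,
      ← L2']
    abel
  rw [mid]
  have sign : ∀ j ∈ Finset.range (m+1), ((-1:ℝ)) ^ (m + 1 - j) •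
      Finsupp.mapDomain (List.cons z) (shuffle (a :: s.take j) (s.drop j).reverse)
      = - (((-1:ℝ)) ^ (m - j) •
        Finsupp.mapDomain (List.cons z) (shuffle (a :: s.take j) (s.drop j).reverse)) := by
    intro j hj
    have : m + 1 - j = (m - j) + 1 := by
      have := Finset.mem_range.mp hj; omega
    rw [this, pow_succ, mul_comm, neg_one_mul, neg_smul]
  rw [Finset.sum_congr rfl sign, Finset.sum_neg_distrib]
  have L5' : (∑ j ∈ Finset.range (m+1), ((-1:ℝ)) ^ (m - j) •
          Finsupp.mapDomain (List.cons z)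
            (shuffle (a :: s.take j) (s.drop j).reverse))
      = Finsupp.mapDomain (List.cons z) (Tsum (a :: s))
        - ((-1:ℝ)) ^ (m+1) • Finsupp.single (z :: (a :: s).reverse) 1 := by
    rw [L5]; abel
  rw [L5', hrev]
  have e : ((-1:ℝ)) ^ (m + 2) = - ((-1:ℝ)) ^ (m+1) := by
    rw [pow_succ]; ring
  rw [e]
  module

lemma Tsum_eq_zero : ∀ (N : ℕ) (w : List A), w.length ≤ N → w ≠ [] → Tsum w = 0 := by
  intro N
  induction N with
  | zero => intro w hw hne; cases w with
    | nil => exact absurd rfl hne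
    | cons a t => simp at hw
  | succ N ih =>
    intro w hw hne
    cases w with
    | nil => exact absurd rfl hne
    | cons a t =>
      rcases List.eq_nil_or_concat t with rfl | ⟨s, z, rfl⟩
      · exact Tsum_singleton a
      · rw [List.concat_eq_append, Tsum_rec a z s]
        rw [ih (s ++ [z]) (by simp at hw ⊢; omega) (by simp),
            ih (a :: s) (by simp at hw ⊢; omega) (by simp)]
        simp
lemma headI_cons_tail {l : List ℕ} (h : l ≠ []) : l.headI :: l.tail = l := by
  cases l with
  | nil => exact absurd rfl h
  | cons a t => rfl

lemma comp_blocks_ne_nil {n : ℕ} (c : Composition (n + 1)) : c.blocks ≠ [] := by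
  intro h
  have := c.blocks_sum
  rw [h] at this
  simp at this

lemma comp_headI_add {n : ℕ} (c : Composition (n + 1)) :
    c.blocks.headI + c.blocks.tail.sum = n + 1 := by
  conv_rhs => rw [← c.blocks_sum, ← headI_cons_tail (comp_blocks_ne_nil c)]
  simp

lemma comp_headI_pos {n : ℕ} (c : Composition (n + 1)) : 0 < c.blocks.headI := by
  apply c.blocks_pos
  rw [← headI_cons_tail (comp_blocks_ne_nil c)]
  exact List.mem_cons_self

/-- peel-off-first-block equivalence for compositions -/
def compEquiv (n : ℕ) : Composition (n + 1) ≃ (i : Fin (n + 1)) × Composition (n - i) where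
  toFun c :=
    ⟨⟨c.blocks.headI - 1, by
        have h1 := comp_headI_add c
        have h2 := comp_headI_pos c
        omega⟩,
      ⟨c.blocks.tail,
        fun hi => c.blocks_pos (List.mem_of_mem_tail hi),
        by
          have h1 := comp_headI_add c
          have h2 := comp_headI_pos c
          simp only []
          omega⟩⟩
  invFun p :=
    ⟨((p.1 : ℕ) + 1) :: p.2.blocks,
      by
        intro i hi
        rcases List.mem_cons.mp hi with rfl | hi
        · omega
        · exact p.2.blocks_pos hi,
      by
        have h1 := p.2.blocks_sum
        have h2 := p.1.isLt
        simp only [List.sum_cons, h1]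
        omega⟩
  left_inv c := by
    apply Composition.ext
    simp only []
    have h2 := comp_headI_pos c
    have : c.blocks.headI - 1 + 1 = c.blocks.headI := by omega
    rw [this, headI_cons_tail (comp_blocks_ne_nil c)]
  right_inv p := rfl

instance : Unique (Composition 0) where
  default := ⟨[], by intro i hi; simp at hi, rfl⟩
  uniq c := by
    apply Composition.ext
    have h := c.blocks_sum
    cases hb : c.blocks with
    | nil => rfl
    | cons b bs =>
      exfalso
      have hpos : 0 < b := c.blocks_pos (by rw [hb]; exact List.mem_cons_self)
      rw [hb] at h
      simp only [List.sum_cons] at h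
      omega

/-! ### Linear extension of shuffling on the left by a fixed word -/

noncomputable def shL (u : List A) : (List A →₀ ℝ) →ₗ[ℝ] (List A →₀ ℝ) :=
  Finsupp.lsum ℝ fun v => LinearMap.toSpanSingleton ℝ _ (shuffle u v)

lemma shL_single (u v : List A) (c : ℝ) :
    shL u (Finsupp.single v c) = c • shuffle u v := by
  simp [shL, Finsupp.lsum_single, LinearMap.toSpanSingleton_apply]

lemma shP_single (u : List A) (Q : List A →₀ ℝ) :
    shP (Finsupp.single u 1) Q = shL u Q := by
  rw [shP, Finsupp.sum_single_index, shL, Finsupp.lsum_apply]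
  · apply Finsupp.sum_congr
    intro v _
    rw [one_mul, LinearMap.toSpanSingleton_apply]
  · simp

lemma shuffleList_cons (u : List A) (L : List (List A)) :
    shuffleList (u :: L) = shL u (shuffleList L) := by
  rw [show shuffleList (u :: L) = shP (Finsupp.single u 1) (shuffleList L) from rfl,
    shP_single]

lemma shuffleList_nil : shuffleList ([] : List (List A)) = Finsupp.single [] 1 := rfl

lemma shuffleList_singleton (u : List A) : shuffleList [u] = Finsupp.single u 1 := by
  rw [shuffleList_cons, shuffleList_nil, shL_single, one_smul, shuffle_nil_right]

lemma sum_comp_congr {m k : ℕ} (h : m = k) (G : List ℕ → (List A →₀ ℝ)) :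
    ∑ c : Composition m, G c.blocks = ∑ c : Composition k, G c.blocks := by
  subst h; rfl

/-! ### The alternating composition sum -/

lemma Dsum_cons (a : A) (t : List A) :
    (∑ c : Composition (t.length + 1), ((-1:ℝ)) ^ (c.blocks.length - 1) •
        shuffleList (List.splitWrtCompositionAux (a :: t) c.blocks))
      = ∑ i : Fin (t.length + 1), ∑ c' : Composition (t.length - (i : ℕ)),
          ((-1:ℝ)) ^ c'.blocks.length •
            shL ((a :: t).take ((i : ℕ) + 1))
              (shuffleList
                (List.splitWrtCompositionAux ((a :: t).drop ((i : ℕ) + 1)) c'.blocks)) := by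
  rw [← Equiv.sum_comp (compEquiv t.length).symm
      (fun c : Composition (t.length + 1) => ((-1:ℝ)) ^ (c.blocks.length - 1) •
        shuffleList (List.splitWrtCompositionAux (a :: t) c.blocks)),
    ← Finset.univ_sigma_univ, Finset.sum_sigma]
  apply Finset.sum_congr rfl
  intro i _
  apply Finset.sum_congr rfl
  intro c' _
  have hb : ((compEquiv t.length).symm ⟨i, c'⟩).blocks = ((i : ℕ) + 1) :: c'.blocks := rfl
  rw [hb, List.splitWrtCompositionAux_cons, shuffleList_cons]
  simp only [List.length_cons, Nat.add_sub_cancel]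

lemma Dsum_aux (N : ℕ)
    (ih : ∀ v : List A, v.length ≤ N →
      (∑ c : Composition v.length, ((-1:ℝ)) ^ (c.blocks.length - 1) •
          shuffleList (List.splitWrtCompositionAux v c.blocks))
        = ((-1:ℝ)) ^ (v.length - 1) • Finsupp.single v.reverse 1)
    (u v : List A) (hv : v.length ≤ N) (m : ℕ) (hm : v.length = m) :
    (∑ c : Composition m, ((-1:ℝ)) ^ c.blocks.length •
        shL u (shuffleList (List.splitWrtCompositionAux v c.blocks)))
      = ((-1:ℝ)) ^ m • shuffle u v.reverse := by
  subst hm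
  by_cases h0 : v = []
  · subst h0
    simp only [List.length_nil]
    rw [Fintype.sum_unique]
    rw [show ∀ c : Composition 0, c.blocks = [] from fun c =>
    List.length_eq_zero_iff.mp (by have := c.length_le; rw [c.blocks_length]; omega)]
    rw [show List.splitWrtCompositionAux ([] : List A) [] = [] from rfl, shuffleList_nil,
      shL_single, one_smul]
    simp [shuffle_nil_right]
  · have hvpos : 0 < v.length := List.length_pos_iff.mpr h0
    have step : ∀ c : Composition v.length, c ∈ Finset.univ →
        ((-1:ℝ)) ^ c.blocks.length •
            shL u (shuffleList (List.splitWrtCompositionAux v c.blocks))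
          = -(((-1:ℝ)) ^ (c.blocks.length - 1) •
              shL u (shuffleList (List.splitWrtCompositionAux v c.blocks))) := by
      intro c _
      have hl : 0 < c.blocks.length := by
        rw [c.blocks_length]; exact c.length_pos_of_pos hvpos
      have hp : ((-1:ℝ)) ^ c.blocks.length = -((-1:ℝ)) ^ (c.blocks.length - 1) := by
        conv_lhs => rw [show c.blocks.length = (c.blocks.length - 1) + 1 by omega]
        rw [pow_succ]; ring
      rw [hp, neg_smul]
    rw [Finset.sum_congr rfl step, Finset.sum_neg_distrib]
    have pull : (∑ c : Composition v.length, ((-1:ℝ)) ^ (c.blocks.length - 1) •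
          shL u (shuffleList (List.splitWrtCompositionAux v c.blocks)))
        = shL u (∑ c : Composition v.length, ((-1:ℝ)) ^ (c.blocks.length - 1) •
            shuffleList (List.splitWrtCompositionAux v c.blocks)) := by
      rw [map_sum]
      apply Finset.sum_congr rfl
      intro c _
      rw [map_smul]
    rw [pull, ih v hv, map_smul, shL_single, one_smul]
    have hp : ((-1:ℝ)) ^ v.length = -((-1:ℝ)) ^ (v.length - 1) := by
      conv_lhs => rw [show v.length = (v.length - 1) + 1 by omega]
      rw [pow_succ]; ring
    rw [hp, neg_smul]

lemma Dsum_nil :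
    (∑ c : Composition (List.length ([] : List A)), ((-1:ℝ)) ^ (c.blocks.length - 1) •
        shuffleList (List.splitWrtCompositionAux ([] : List A) c.blocks))
      = Finsupp.single ([] : List A) 1 := by
  simp only [List.length_nil]
  rw [Fintype.sum_unique]
  rw [show ∀ c : Composition 0, c.blocks = [] from fun c =>
    List.length_eq_zero_iff.mp (by have := c.length_le; rw [c.blocks_length]; omega)]
  rw [show List.splitWrtCompositionAux ([] : List A) [] = [] from rfl, shuffleList_nil]
  norm_num

lemma Dsum_eq : ∀ (N : ℕ) (w : List A), w.length ≤ N →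
    (∑ c : Composition w.length, ((-1:ℝ)) ^ (c.blocks.length - 1) •
        shuffleList (List.splitWrtCompositionAux w c.blocks))
      = ((-1:ℝ)) ^ (w.length - 1) • Finsupp.single w.reverse 1 := by
  intro N
  induction N with
  | zero =>
    intro w hw
    have hnil : w = [] := List.length_eq_zero_iff.mp (Nat.le_zero.mp hw)
    subst hnil
    rw [Dsum_nil]
    norm_num
  | succ N ih =>
    intro w hw
    cases w with
    | nil => rw [Dsum_nil]; norm_num
    | cons a t =>
      simp only [List.length_cons]
      rw [Dsum_cons]
      have hinner : ∀ i : Fin (t.length + 1),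
          (∑ c' : Composition (t.length - (i : ℕ)), ((-1:ℝ)) ^ c'.blocks.length •
              shL ((a :: t).take ((i : ℕ) + 1))
                (shuffleList
                  (List.splitWrtCompositionAux ((a :: t).drop ((i : ℕ) + 1)) c'.blocks)))
            = ((-1:ℝ)) ^ (t.length - (i : ℕ)) •
                shuffle ((a :: t).take ((i : ℕ) + 1))
                  ((a :: t).drop ((i : ℕ) + 1)).reverse := by
        intro i
        have hvl : ((a :: t).drop ((i : ℕ) + 1)).length = t.length - (i : ℕ) := by
          rw [List.length_drop]
          simp
        have hvN : ((a :: t).drop ((i : ℕ) + 1)).length ≤ N := by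
          rw [hvl]
          simp only [List.length_cons] at hw
          omega
        exact Dsum_aux N ih ((a :: t).take ((i : ℕ) + 1)) ((a :: t).drop ((i : ℕ) + 1))
          hvN (t.length - (i : ℕ)) hvl
      rw [Finset.sum_congr rfl (fun i _ => hinner i)]
      rw [Fin.sum_univ_eq_sum_range (fun j => ((-1:ℝ)) ^ (t.length - j) •
        shuffle ((a :: t).take (j + 1)) ((a :: t).drop (j + 1)).reverse) (t.length + 1)]
      have hT := Tsum_eq_zero (t.length + 1) (a :: t) (by simp) (by simp)
      rw [Tsum] at hT
      simp only [List.length_cons] at hT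
      rw [Finset.sum_range_succ'] at hT
      simp only [Nat.add_sub_add_right, Nat.sub_zero, List.take_zero, List.drop_zero,
        shuffle_nil_left] at hT
      rw [add_eq_zero_iff_eq_neg] at hT
      rw [hT]
      have hp : ((-1:ℝ)) ^ (t.length + 1) = -((-1:ℝ)) ^ t.length := by
        rw [pow_succ]; ring
      rw [hp, neg_smul, neg_neg]
      simp

/-! ### Special compositions -/

lemma split_ones : ∀ (w : List A),
    List.splitWrtCompositionAux w (List.replicate w.length 1) = w.map (fun x => [x]) := by
  intro w
  induction w with
  | nil => rfl
  | cons a t ih =>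
    rw [show (a :: t).length = t.length + 1 from rfl, List.replicate_succ,
      List.splitWrtCompositionAux_cons]
    simp [ih]

lemma sinhlogC_split (n : ℕ) (hn : 1 ≤ n) (ε : ℝ) (k : ℕ) :
    sinhlogC n ε k = (1 / 2 : ℝ) * ((-1:ℝ)) ^ (k - 1)
      + (if k = 1 then (1 / 2 : ℝ) else 0) + (if k = n + 1 then ε else 0) := by
  rw [sinhlogC]
  by_cases h1 : k = n + 1
  · have h2 : ¬ k = 1 := by omega
    rw [if_pos h1, if_neg h2, if_pos h1, h1]
    norm_num
  · by_cases h2 : k = 1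
    · rw [if_neg h1, if_pos h2, if_pos h2, if_neg h1, h2]
      norm_num
    · rw [if_neg h1, if_neg h2, if_neg h2, if_neg h1]
      ring

/-- **Sinh-log coefficient identity** (Lemma 2.6 and Corollary 2.7, word form): for any
word `w = a₁⋯a_{n+1}`,
`Σ_{k=1}^{n+1} C_k Σ_{u₁⋯u_k = w, uᵢ nonempty} u₁ ⧢ ⋯ ⧢ u_k
  = (1/2)(w − (−1)^{n+1} a_{n+1}⋯a₁) + ε (a₁ ⧢ ⋯ ⧢ a_{n+1})`,
the decompositions into `k` nonempty factors being parametrised by the compositions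
`c` of `n+1` with `c.length = k`. -/
theorem sinhlog_coefficient_identity (n : ℕ) (hn : 1 ≤ n) (ε : ℝ) (a : Fin (n + 1) → A) :
    ∑ c : Composition (n + 1),
        sinhlogC n ε c.length • shuffleList ((List.ofFn a).splitWrtComposition c) =
      (1 / 2 : ℝ) •
          (Finsupp.single (List.ofFn a) (1 : ℝ) -
            ((-1 : ℝ)) ^ (n + 1) • Finsupp.single (List.ofFn a).reverse (1 : ℝ)) +
        ε • shuffleList ((List.ofFn a).map fun x => [x]) := by
  classical
  have hw : (List.ofFn a).length = n + 1 := by simp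
  set w := List.ofFn a with hwdef
  have hpos : 0 < n + 1 := by omega
  have hsplit : ∀ c : Composition (n + 1), c ∈ Finset.univ →
      sinhlogC n ε c.length • shuffleList (w.splitWrtComposition c)
      = ((1 / 2 : ℝ) * ((-1:ℝ)) ^ (c.length - 1)) • shuffleList (w.splitWrtComposition c)
        + (if c.length = 1 then (1 / 2 : ℝ) else 0) • shuffleList (w.splitWrtComposition c)
        + (if c.length = n + 1 then ε else 0) • shuffleList (w.splitWrtComposition c) := by
    intro c _
    rw [← add_smul, ← add_smul,
      sinhlogC_split n hn ε c.length]
  rw [Finset.sum_congr rfl hsplit, Finset.sum_add_distrib, Finset.sum_add_distrib]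
  have hS1 : (∑ c : Composition (n + 1),
      ((1 / 2 : ℝ) * ((-1:ℝ)) ^ (c.length - 1)) • shuffleList (w.splitWrtComposition c))
      = (1 / 2 : ℝ) • (((-1:ℝ)) ^ n • Finsupp.single w.reverse 1) := by
    have e1 : ∀ c : Composition (n + 1), c ∈ Finset.univ →
        ((1 / 2 : ℝ) * ((-1:ℝ)) ^ (c.length - 1)) • shuffleList (w.splitWrtComposition c)
        = (1 / 2 : ℝ) • (((-1:ℝ)) ^ (c.blocks.length - 1) •
            shuffleList (List.splitWrtCompositionAux w c.blocks)) := by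
      intro c _
      rw [mul_smul, c.blocks_length]
      rfl
    rw [Finset.sum_congr rfl e1, ← Finset.smul_sum]
    congr 1
    have key := (sum_comp_congr hw (fun b => ((-1:ℝ)) ^ (b.length - 1) •
        shuffleList (List.splitWrtCompositionAux w b))).symm.trans
      (Dsum_eq (n + 1) w (le_of_eq hw))
    rw [hw] at key
    simpa using key
  have hsingle : w.splitWrtComposition (Composition.single (n + 1) hpos) = [w] := by
    show List.splitWrtCompositionAux w (Composition.single (n + 1) hpos).blocks = [w]
    rw [Composition.single_blocks, List.splitWrtCompositionAux_cons]
    rw [show List.take (n + 1) w = w by rw [← hw]; exact List.take_length]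
    rfl
  have hS2 : (∑ c : Composition (n + 1),
      (if c.length = 1 then (1 / 2 : ℝ) else 0) • shuffleList (w.splitWrtComposition c))
      = (1 / 2 : ℝ) • Finsupp.single w 1 := by
    have e2 : ∀ c : Composition (n + 1), c ∈ Finset.univ →
        (if c.length = 1 then (1 / 2 : ℝ) else 0) • shuffleList (w.splitWrtComposition c)
        = (if c = Composition.single (n + 1) hpos then
            (1 / 2 : ℝ) • shuffleList (w.splitWrtComposition c) else 0) := by
      intro c _
      rw [ite_smul, zero_smul]
      exact if_congr (Composition.eq_single_iff_length hpos).symm rfl rfl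
    rw [Finset.sum_congr rfl e2, Finset.sum_ite_eq' Finset.univ]
    rw [if_pos (Finset.mem_univ _), hsingle, shuffleList_singleton]
  have hones : w.splitWrtComposition (Composition.ones (n + 1)) = w.map (fun x => [x]) := by
    show List.splitWrtCompositionAux w (Composition.ones (n + 1)).blocks = _
    rw [Composition.ones_blocks, ← hw, split_ones]
  have hS3 : (∑ c : Composition (n + 1),
      (if c.length = n + 1 then ε else 0) • shuffleList (w.splitWrtComposition c))
      = ε • shuffleList (w.map (fun x => [x])) := by
    have e3 : ∀ c : Composition (n + 1), c ∈ Finset.univ →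
        (if c.length = n + 1 then ε else 0) • shuffleList (w.splitWrtComposition c)
        = (if c = Composition.ones (n + 1) then
            ε • shuffleList (w.splitWrtComposition c) else 0) := by
      intro c _
      rw [ite_smul, zero_smul]
      exact if_congr Composition.eq_ones_iff_length.symm rfl rfl
    rw [Finset.sum_congr rfl e3, Finset.sum_ite_eq' Finset.univ]
    rw [if_pos (Finset.mem_univ _), hones]
  rw [hS1, hS2, hS3]
  have hp : ((-1:ℝ)) ^ (n + 1) = -((-1:ℝ)) ^ n := by rw [pow_succ]; ring
  rw [hp]
  module
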